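/- In the scalar case r = 1, if u : ℝ → ℂ satisfies u'' = 2u³ + s u (Painlevé II) then w := (1/2)u² - (1/2)u' satisfies the Painlevé XXXIV equation w''' = 12 w w' + 2w + s w'. -/

import Mathlib

/-- In the scalar case, if `u` satisfies Painlevé II `u'' = 2u³ + s u`, then the Miura
transform `w := (u² - u')/2` satisfies Painlevé XXXIV: `w''' = 12 w w' + 2w + s w'`. -/
theorem miura_PII_to_PXXXIV
    (u : ℝ → ℂ) (hu : ContDiff ℝ 3 u)
    (hPII : ∀ s : ℝ, deriv (deriv u) s = 2 * (u s) ^ 3 + (s : ℂ) * u s) :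
    ∀ s : ℝ,
      deriv (deriv (deriv (fun t => ((u t) ^ 2 - deriv u t) / 2))) s
        = 12 * (((u s) ^ 2 - deriv u s) / 2)
              * deriv (fun t => ((u t) ^ 2 - deriv u t) / 2) s
          + 2 * (((u s) ^ 2 - deriv u s) / 2)
          + (s : ℂ) * deriv (fun t => ((u t) ^ 2 - deriv u t) / 2) s := by
  have hu3 : ContDiff ℝ (2 + 1 : ℕ) u := by exact_mod_cast hu
  have hu2 : ContDiff ℝ 2 (deriv u) := (contDiff_succ_iff_deriv.mp hu3).2.2
  have hdu : Differentiable ℝ u := hu3.differentiable (by norm_num)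
  have hdv : Differentiable ℝ (deriv u) := hu2.differentiable (by norm_num)
  have hR : ∀ t : ℝ, HasDerivAt (fun t : ℝ => (t : ℂ)) 1 t := by
    intro t
    simpa using (hasDerivAt_id t).ofReal_comp
  have hU : ∀ t : ℝ, HasDerivAt u (deriv u t) t := fun t => (hdu t).hasDerivAt
  have hV : ∀ t : ℝ, HasDerivAt (deriv u) (deriv (deriv u) t) t :=
    fun t => (hdv t).hasDerivAt
  have hp2 : ∀ t : ℝ, HasDerivAt (fun t => u t ^ 2) (2 * u t * deriv u t) t := by
    intro t
    have h : (fun t => u t ^ 2) = fun t => u t * u t := by funext x; ring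
    rw [h]; convert (hU t).mul (hU t) using 1 <;> first | rfl | ring
  have hp3 : ∀ t : ℝ, HasDerivAt (fun t => u t ^ 3) (3 * u t ^ 2 * deriv u t) t := by
    intro t
    have h : (fun t => u t ^ 3) = fun t => u t ^ 2 * u t := by funext x; ring
    rw [h]; convert (hp2 t).mul (hU t) using 1 <;> first | rfl | ring
  have hp4 : ∀ t : ℝ, HasDerivAt (fun t => u t ^ 4) (4 * u t ^ 3 * deriv u t) t := by
    intro t
    have h : (fun t => u t ^ 4) = fun t => u t ^ 3 * u t := by funext x; ring
    rw [h]; convert (hp3 t).mul (hU t) using 1 <;> first | rfl | ring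
  have hv2 : ∀ t : ℝ,
      HasDerivAt (fun t => deriv u t ^ 2) (2 * deriv u t * deriv (deriv u) t) t := by
    intro t
    have h : (fun t => deriv u t ^ 2) = fun t => deriv u t * deriv u t := by funext x; ring
    rw [h]; convert (hV t).mul (hV t) using 1 <;> first | rfl | ring
  -- first derivative of w
  have h1 : deriv (fun t => ((u t) ^ 2 - deriv u t) / 2)
      = fun t => u t * deriv u t - u t ^ 3 - (t : ℂ) * u t / 2 := by
    funext t
    have h : HasDerivAt (fun t => ((u t) ^ 2 - deriv u t) / 2)
        ((2 * u t * deriv u t - deriv (deriv u) t) / 2) t :=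
      ((hp2 t).sub (hV t)).div_const 2
    rw [h.deriv, hPII]
    ring
  -- second derivative of w
  have h2 : deriv (deriv (fun t => ((u t) ^ 2 - deriv u t) / 2))
      = fun t => (deriv u t) ^ 2 + 2 * u t ^ 4 + (t : ℂ) * u t ^ 2
          - 3 * u t ^ 2 * deriv u t - u t / 2 - (t : ℂ) * deriv u t / 2 := by
    rw [h1]
    funext t
    have h : HasDerivAt (fun t => u t * deriv u t - u t ^ 3 - (t : ℂ) * u t / 2)
        ((deriv u t * deriv u t + u t * deriv (deriv u) t - 3 * u t ^ 2 * deriv u t)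
          - (1 * u t + (t : ℂ) * deriv u t) / 2) t :=
      (((hU t).mul (hV t)).sub (hp3 t)).sub (((hR t).mul (hU t)).div_const 2)
    rw [h.deriv, hPII]
    ring
  intro s
  rw [h2, h1]
  have h : HasDerivAt (fun t => (deriv u t) ^ 2 + 2 * u t ^ 4 + (t : ℂ) * u t ^ 2
        - 3 * u t ^ 2 * deriv u t - u t / 2 - (t : ℂ) * deriv u t / 2)
      ((2 * deriv u s * deriv (deriv u) s
        + 2 * (4 * u s ^ 3 * deriv u s)
        + (1 * u s ^ 2 + (s : ℂ) * (2 * u s * deriv u s))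
        - (3 * (2 * u s * deriv u s) * deriv u s + 3 * u s ^ 2 * deriv (deriv u) s)
        - deriv u s / 2
        - (1 * deriv u s + (s : ℂ) * deriv (deriv u) s) / 2)) s := by
    have hA := (hv2 s).add ((hp4 s).const_mul (2 : ℂ))
    have hB := hA.add ((hR s).mul (hp2 s))
    have hC := hB.sub (((hp2 s).const_mul (3 : ℂ)).mul (hV s))
    have hD := hC.sub ((hU s).div_const 2)
    have hE := hD.sub (((hR s).mul (hV s)).div_const 2)
    exact hE
  rw [h.deriv, hPII]
  ring
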